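/- If f : ℝ^d → ℝ ∪ {∞} is an essentially smooth convex function, then for all x, y ∈ int(dom f), D_{f*}(∇f(y), ∇f(x)) ≤ D_f(x, y), where f* is the convex conjugate of f and D denotes the generalized Bregman divergence defined via one-sided directional derivatives. If f is moreover strictly convex on int(dom f) (i.e., Legendre), then this inequality is an equality. -/

import Mathlib

open Filter Topology RealInnerProductSpace Classical

noncomputable section

abbrev E (d : ℕ) := EuclideanSpace ℝ (Fin d)

def IsEssentiallySmooth {d : ℕ} (f : E d → ℝ) (S : Set (E d)) (f' : E d → E d) : Prop :=
  (interior S).Nonempty ∧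
  (∀ x ∈ interior S, HasGradientAt f (f' x) x) ∧
  ∀ (u : ℕ → E d) (y : E d), (∀ n, u n ∈ interior S) → y ∈ frontier S →
    Tendsto u atTop (𝓝 y) → Tendsto (fun n => ‖f' (u n)‖) atTop atTop

def IsProperClosedConvexOn {d : ℕ} (f : E d → ℝ) (S : Set (E d)) : Prop :=
  S.Nonempty ∧ ConvexOn ℝ S f ∧
  IsClosed {p : E d × ℝ | p.1 ∈ S ∧ f p.1 ≤ p.2}

/-- The convex conjugate `f*` of the function equal to `f` on `S` and `∞` outside. -/
def conj {d : ℕ} (f : E d → ℝ) (S : Set (E d)) : E d → EReal :=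
  fun y => ⨆ x ∈ S, ((⟪x, y⟫ - f x : ℝ) : EReal)

/-- `φ' y v` is the one-sided directional derivative of the extended-real-valued convex
function `φ` at `y` in direction `v`, for `y` ranging over the set `T`. -/
def IsOneSidedDirDerivE {d : ℕ} (φ : E d → EReal) (φ' : E d → E d → EReal)
    (T : Set (E d)) : Prop :=
  ∀ y ∈ T, ∀ v : E d,
    Tendsto (fun ε : ℝ => (φ (y + ε • v) - φ y) * ((ε⁻¹ : ℝ) : EReal))
      (𝓝[>] 0) (𝓝 (φ' y v))

lemma subgrad {d : ℕ} {f : E d → ℝ} {S : Set (E d)} (hconv : ConvexOn ℝ S f)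
    {x u : E d} (hx : x ∈ interior S) (hgrad : HasGradientAt f u x) :
    ∀ z ∈ S, f x + ⟪u, z - x⟫ ≤ f z := by
  intro z hz
  set c : ℝ → E d := fun t => x + t • (z - x) with hc
  have hderc : ∀ t : ℝ, HasDerivAt c (z - x) t := by
    intro t
    have h := ((hasDerivAt_id t).smul_const (z - x)).const_add x
    rw [one_smul] at h
    exact h
  have hphi : HasDerivAt (f ∘ c) ⟪u, z - x⟫ 0 := by
    have h1 : HasFDerivAt f (InnerProductSpace.toDual ℝ (E d) u) x := hgrad.hasFDerivAt
    have h2 : HasFDerivAt f (InnerProductSpace.toDual ℝ (E d) u) (c 0) := by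
      simpa [hc] using h1
    simpa [InnerProductSpace.toDual_apply_apply] using h2.comp_hasDerivAt 0 (hderc 0)
  have hxS : x ∈ S := interior_subset hx
  have hslope : Tendsto (slope (f ∘ c) 0) (𝓝[>] 0) (𝓝 ⟪u, z - x⟫) :=
    (hasDerivAt_iff_tendsto_slope.mp hphi).mono_left
      (nhdsWithin_mono _ (fun t ht => ne_of_gt ht))
  have hbound : ∀ᶠ t in 𝓝[>] (0:ℝ), slope (f ∘ c) 0 t ≤ f z - f x := by
    filter_upwards [Ioo_mem_nhdsGT_of_mem (Set.mem_Ico.mpr ⟨le_refl (0:ℝ), one_pos⟩)]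
      with t ht
    obtain ⟨ht0, ht1⟩ := ht
    have hcomb : f (c t) ≤ (1 - t) * f x + t * f z := by
      have := hconv.2 hxS hz (by linarith : (0:ℝ) ≤ 1 - t) (le_of_lt ht0) (by ring)
      have hct : c t = (1 - t) • x + t • z := by
        simp [hc, smul_sub, sub_smul]; abel
      rw [hct]; exact this
    have : slope (f ∘ c) 0 t = (f (c t) - f x) / t := by
      simp [slope, hc]; ring
    rw [this]
    rw [div_le_iff₀ ht0]
    nlinarith
  have := le_of_tendsto hslope hbound
  linarith

lemma conj_ge {d : ℕ} (f : E d → ℝ) (S : Set (E d)) {w : E d} (hw : w ∈ S) (z : E d) :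
    ((⟪w, z⟫ - f w : ℝ) : EReal) ≤ conj f S z :=
  le_iSup₂ (f := fun x (_ : x ∈ S) => ((⟪x, z⟫ - f x : ℝ) : EReal)) w hw

lemma conj_eq {d : ℕ} {f : E d → ℝ} {S : Set (E d)} {x u : E d} (hx : x ∈ S)
    (hsub : ∀ z ∈ S, f x + ⟪u, z - x⟫ ≤ f z) :
    conj f S u = ((⟪x, u⟫ - f x : ℝ) : EReal) := by
  refine le_antisymm (iSup₂_le fun w hw => ?_) (conj_ge f S hx u)
  rw [EReal.coe_le_coe_iff]
  have h := hsub w hw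
  have hi : ⟪u, w - x⟫ = ⟪w, u⟫ - ⟪x, u⟫ := by
    rw [inner_sub_right, real_inner_comm u w, real_inner_comm u x]
  linarith [h, hi.le, hi.ge]

lemma fstar_lower {d : ℕ} {f : E d → ℝ} {S : Set (E d)} {x u v : E d} {L : EReal}
    (hx : x ∈ S) (hsub : ∀ z ∈ S, f x + ⟪u, z - x⟫ ≤ f z)
    (htend : Tendsto (fun ε : ℝ => (conj f S (u + ε • v) - conj f S u) * ((ε⁻¹ : ℝ) : EReal))
      (𝓝[>] 0) (𝓝 L)) :
    ((⟪x, v⟫ : ℝ) : EReal) ≤ L := by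
  have hcu : conj f S u = ((⟪x, u⟫ - f x : ℝ) : EReal) := conj_eq hx hsub
  refine ge_of_tendsto htend ?_
  filter_upwards [self_mem_nhdsWithin] with ε (hε : 0 < ε)
  have h1 : ((⟪x, u + ε • v⟫ - f x : ℝ) : EReal) ≤ conj f S (u + ε • v) := conj_ge f S hx _
  have h2 : ⟪x, u + ε • v⟫ - f x = (⟪x, u⟫ - f x) + ε * ⟪x, v⟫ := by
    rw [inner_add_right, real_inner_smul_right]; ring
  have h3 : ((ε * ⟪x, v⟫ : ℝ) : EReal) ≤ conj f S (u + ε • v) - conj f S u := by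
    rw [hcu]
    calc ((ε * ⟪x, v⟫ : ℝ) : EReal)
        = (((⟪x, u⟫ - f x) + ε * ⟪x, v⟫ : ℝ) : EReal) - ((⟪x, u⟫ - f x : ℝ) : EReal) := by
          rw [← EReal.coe_sub]; norm_cast; ring
      _ ≤ conj f S (u + ε • v) - ((⟪x, u⟫ - f x : ℝ) : EReal) :=
          EReal.sub_le_sub (h2 ▸ h1) le_rfl
  calc ((⟪x, v⟫ : ℝ) : EReal) = ((ε * ⟪x, v⟫ * ε⁻¹ : ℝ) : EReal) := by
        rw [mul_comm ε, mul_assoc, mul_inv_cancel₀ (ne_of_gt hε), mul_one]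
    _ = ((ε * ⟪x, v⟫ : ℝ) : EReal) * ((ε⁻¹ : ℝ) : EReal) := by rw [EReal.coe_mul]
    _ ≤ (conj f S (u + ε • v) - conj f S u) * ((ε⁻¹ : ℝ) : EReal) := by
        apply mul_le_mul_of_nonneg_right h3
        exact_mod_cast (inv_nonneg.mpr hε.le : (0:ℝ) ≤ ε⁻¹)

lemma uniq {d : ℕ} {f : E d → ℝ} {S : Set (E d)} (hconv : ConvexOn ℝ S f)
    (hstrict : StrictConvexOn ℝ (interior S) f) {x u : E d} (hx : x ∈ interior S)
    (hsub : ∀ z ∈ S, f x + ⟪u, z - x⟫ ≤ f z) {w : E d} (hw : w ∈ S)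
    (heq : f w = f x + ⟪u, w - x⟫) : w = x := by
  by_contra hne
  set m : E d := (1/2 : ℝ) • x + (1/2 : ℝ) • w with hm
  have hmint : m ∈ interior S := hconv.1.combo_interior_self_mem_interior hx hw
    (by norm_num) (by norm_num) (by norm_num)
  have hfm_le : f m ≤ f x + ⟪u, m - x⟫ := by
    have h := hconv.2 (interior_subset hx) hw
      (by norm_num : (0:ℝ) ≤ 1/2) (by norm_num : (0:ℝ) ≤ 1/2) (by norm_num)
    have hinner : ⟪u, m - x⟫ = (1/2 : ℝ) * ⟪u, w - x⟫ := by
      have : m - x = (1/2 : ℝ) • (w - x) := by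
        rw [hm]; module
      rw [this, real_inner_smul_right]
    rw [hinner]
    calc f m ≤ (1/2 : ℝ) * f x + (1/2 : ℝ) * f w := h
      _ = f x + (1/2:ℝ) * ⟪u, w - x⟫ := by rw [heq]; ring
  have hfm_ge : f x + ⟪u, m - x⟫ ≤ f m := hsub m (interior_subset hmint)
  have hfm : f m = f x + ⟪u, m - x⟫ := le_antisymm hfm_le hfm_ge
  have hmx : m ≠ x := by
    intro h
    apply hne
    have : (1/2 : ℝ) • w = (1/2 : ℝ) • x := by
      have := h; rw [hm] at this
      have h2 : (1/2:ℝ) • x + (1/2:ℝ) • w - (1/2:ℝ) • x = x - (1/2:ℝ) • x := by rw [this]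
      calc (1/2:ℝ) • w = (1/2:ℝ) • x + (1/2:ℝ) • w - (1/2:ℝ) • x := by module
        _ = x - (1/2:ℝ) • x := h2
        _ = (1/2:ℝ) • x := by module
    have := smul_right_injective (E d) (by norm_num : (1/2:ℝ) ≠ 0) this
    exact this
  -- strict convexity between x and m
  have hmid := hstrict.2 hx hmint (Ne.symm hmx) (by norm_num : (0:ℝ) < 1/2)
    (by norm_num : (0:ℝ) < 1/2) (by norm_num)
  set m2 : E d := (1/2 : ℝ) • x + (1/2 : ℝ) • m with hm2
  have hm2S : m2 ∈ S := interior_subset (hconv.1.combo_interior_self_mem_interior hx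
    (interior_subset hmint) (by norm_num) (by norm_num) (by norm_num))
  have hge := hsub m2 hm2S
  have hinner2 : ⟪u, m2 - x⟫ = (1/2 : ℝ) * ⟪u, m - x⟫ := by
    have : m2 - x = (1/2 : ℝ) • (m - x) := by rw [hm2]; module
    rw [this, real_inner_smul_right]
  rw [hinner2] at hge
  have : f m2 < (1/2:ℝ) * f x + (1/2:ℝ) * f m := hmid
  rw [hfm] at this
  linarith

lemma sublevel_bounded {d : ℕ} {f : E d → ℝ} {S : Set (E d)} (hconv : ConvexOn ℝ S f)
    (hclosed : IsClosed {p : E d × ℝ | p.1 ∈ S ∧ f p.1 ≤ p.2})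
    (hstrict : StrictConvexOn ℝ (interior S) f) {x u : E d} (hx : x ∈ interior S)
    (hsub : ∀ z ∈ S, f x + ⟪u, z - x⟫ ≤ f z) (r : ℝ) :
    ∃ R : ℝ, ∀ w ∈ S, f w - ⟪w, u⟫ ≤ r → ‖w‖ ≤ R := by
  by_contra hcon
  push_neg at hcon
  have h : ∀ R : ℝ, ∃ w, w ∈ S ∧ (f w - ⟪w, u⟫ ≤ r ∧ R < ‖w‖) := by
    intro R
    obtain ⟨w, hw1, hw2, hw3⟩ := hcon R
    exact ⟨w, hw1, hw2, hw3⟩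
  set w : ℕ → E d := fun n => (h (‖x‖ + n + 1)).choose with hw
  have hwS : ∀ n, w n ∈ S := fun n => (h (‖x‖ + n + 1)).choose_spec.1
  have hwr : ∀ n, f (w n) - ⟪w n, u⟫ ≤ r := fun n => (h (‖x‖ + n + 1)).choose_spec.2.1
  have hwn : ∀ n : ℕ, ‖x‖ + n + 1 < ‖w n‖ := fun n => (h (‖x‖ + n + 1)).choose_spec.2.2
  set R : ℕ → ℝ := fun n => ‖w n - x‖ with hR
  have hRn : ∀ n : ℕ, (n : ℝ) + 1 ≤ R n := by
    intro n
    have h1 := hwn n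
    have h2 : ‖w n‖ - ‖x‖ ≤ ‖w n - x‖ := norm_sub_norm_le _ _
    simp only [hR]; linarith
  have hRpos : ∀ n, 0 < R n := fun n => lt_of_lt_of_le (by positivity) (hRn n)
  set b : ℕ → ℝ := fun n => (R n)⁻¹ with hb
  have hbpos : ∀ n, 0 < b n := fun n => inv_pos.mpr (hRpos n)
  have hble : ∀ n, b n ≤ 1 := by
    intro n
    rw [hb]
    rw [inv_le_one_iff₀]
    right
    have : (0:ℝ) ≤ (n:ℝ) := n.cast_nonneg
    linarith [hRn n]
  have hbto : Tendsto b atTop (𝓝 0) := by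
    apply squeeze_zero (fun n => (hbpos n).le) (fun n => ?_)
      tendsto_one_div_add_atTop_nhds_zero_nat
    rw [hb, one_div]
    exact inv_anti₀ (by positivity) (hRn n)
  set dir : ℕ → E d := fun n => b n • (w n - x) with hdir
  have hdirsph : ∀ n, dir n ∈ Metric.sphere (0 : E d) 1 := by
    intro n
    simp only [hdir, mem_sphere_iff_norm, sub_zero, norm_smul, Real.norm_eq_abs,
      abs_of_pos (hbpos n)]
    simp only [hb]
    rw [inv_mul_cancel₀ (ne_of_gt (hRpos n))]
  obtain ⟨e, heS, φ, hφ, hdirto⟩ := (isCompact_sphere (0 : E d) 1).tendsto_subseq hdirsph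
  have hxS : x ∈ S := interior_subset hx
  -- points p n on segment
  set p : ℕ → E d := fun n => x + dir n with hp
  have hpcomb : ∀ n, p n = (1 - b n) • x + b n • w n := by
    intro n; simp only [hp, hdir]; module
  have hpS : ∀ n, p n ∈ S := by
    intro n
    rw [hpcomb n]
    exact hconv.1 hxS (hwS n) (by linarith [hble n]) (hbpos n).le (by ring)
  set c : ℕ → ℝ := fun n => (1 - b n) * f x + b n * r + b n * ⟪w n, u⟫ with hc
  have hpc : ∀ n, f (p n) ≤ c n := by
    intro n
    have h1 := hconv.2 hxS (hwS n) (by linarith [hble n] : (0:ℝ) ≤ 1 - b n) (hbpos n).le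
      (by ring)
    rw [← hpcomb n] at h1
    simp only [smul_eq_mul] at h1
    have h2 := hwr n
    calc f (p n) ≤ (1 - b n) * f x + b n * f (w n) := h1
      _ ≤ c n := by
          have hcn : c n = (1 - b n) * f x + b n * r + b n * ⟪w n, u⟫ := rfl
          rw [hcn]; nlinarith [hbpos n]
  -- limits
  have hbφ : Tendsto (fun k => b (φ k)) atTop (𝓝 0) := hbto.comp hφ.tendsto_atTop
  have hpto : Tendsto (fun k => p (φ k)) atTop (𝓝 (x + e)) := by
    exact (tendsto_const_nhds.add hdirto)
  have hinto : Tendsto (fun k => ⟪dir (φ k), u⟫) atTop (𝓝 ⟪e, u⟫) :=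
    hdirto.inner tendsto_const_nhds
  have hcalt : ∀ n, c n = (1 - b n) * f x + b n * r + ⟪dir n, u⟫ + b n * ⟪x, u⟫ := by
    intro n
    simp only [hc, hdir]
    rw [real_inner_smul_left, inner_sub_left]
    ring
  have hcto : Tendsto (fun k => c (φ k)) atTop (𝓝 (f x + ⟪e, u⟫)) := by
    have : Tendsto (fun k => (1 - b (φ k)) * f x + b (φ k) * r + ⟪dir (φ k), u⟫
        + b (φ k) * ⟪x, u⟫) atTop (𝓝 ((1 - 0) * f x + 0 * r + ⟪e, u⟫ + 0 * ⟪x, u⟫)) := by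
      exact (((tendsto_const_nhds.sub hbφ).mul tendsto_const_nhds).add
        (hbφ.mul tendsto_const_nhds)).add hinto |>.add (hbφ.mul tendsto_const_nhds)
    simp only [hcalt]
    simpa using this
  have hmem : (x + e, f x + ⟪e, u⟫) ∈ {p : E d × ℝ | p.1 ∈ S ∧ f p.1 ≤ p.2} :=
    hclosed.isSeqClosed (x := fun k => (p (φ k), c (φ k)))
      (fun k => ⟨hpS (φ k), hpc (φ k)⟩) (hpto.prodMk_nhds hcto)
  have heq : f (x + e) = f x + ⟪u, (x + e) - x⟫ := by
    have h1 : f x + ⟪u, (x + e) - x⟫ ≤ f (x + e) := hsub _ hmem.1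
    have h2 : f (x + e) ≤ f x + ⟪e, u⟫ := hmem.2
    have h3 : ⟪u, (x + e) - x⟫ = ⟪e, u⟫ := by
      rw [add_sub_cancel_left, real_inner_comm]
    linarith [h3.le, h3.ge]
  have := uniq hconv hstrict hx hsub hmem.1 heq
  have h5 : x + e = x := this
  have he0 : e = 0 := by
    have := congrArg (fun z => z - x) h5
    simpa using this
  rw [he0] at heS
  simp at heS

set_option maxHeartbeats 1000000 in
lemma crux {d : ℕ} {f : E d → ℝ} {S : Set (E d)} (hconv : ConvexOn ℝ S f)
    (hclosed : IsClosed {p : E d × ℝ | p.1 ∈ S ∧ f p.1 ≤ p.2})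
    (hstrict : StrictConvexOn ℝ (interior S) f)
    {x y u uy : E d} (hx : x ∈ interior S) (hy : y ∈ interior S)
    (hsubx : ∀ z ∈ S, f x + ⟪u, z - x⟫ ≤ f z)
    (hsuby : ∀ z ∈ S, f y + ⟪uy, z - y⟫ ≤ f z)
    {L : EReal}
    (htend : Tendsto (fun ε : ℝ => (conj f S (u + ε • (uy - u)) - conj f S u)
      * ((ε⁻¹ : ℝ) : EReal)) (𝓝[>] 0) (𝓝 L)) :
    L ≤ ((⟪x, uy - u⟫ : ℝ) : EReal) := by
  set v : E d := uy - u with hv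
  set Mx : ℝ := ⟪x, u⟫ - f x with hMx
  set My : ℝ := ⟪y, uy⟫ - f y with hMy
  have hxS : x ∈ S := interior_subset hx
  have hyS : y ∈ S := interior_subset hy
  have hcu : conj f S u = (Mx : EReal) := conj_eq hxS hsubx
  have hMxw : ∀ w ∈ S, ⟪w, u⟫ - f w ≤ Mx := by
    intro w hw
    have h := hsubx w hw
    have hi : ⟪u, w - x⟫ = ⟪w, u⟫ - ⟪x, u⟫ := by
      rw [inner_sub_right, real_inner_comm u w, real_inner_comm u x]
    rw [hMx]; linarith [hi.le, hi.ge]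
  have hMyw : ∀ w ∈ S, ⟪w, uy⟫ - f w ≤ My := by
    intro w hw
    have h := hsuby w hw
    have hi : ⟪uy, w - y⟫ = ⟪w, uy⟫ - ⟪y, uy⟫ := by
      rw [inner_sub_right, real_inner_comm uy w, real_inner_comm uy y]
    rw [hMy]; linarith [hi.le, hi.ge]
  have hvsplit : ∀ w : E d, ⟪w, v⟫ = ⟪w, uy⟫ - ⟪w, u⟫ := fun w => inner_sub_right w uy u
  -- main claim
  have key : ∀ δ : ℝ, 0 < δ → L ≤ ((⟪x, v⟫ + δ : ℝ) : EReal) := by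
    intro δ hδ
    have hev : ∃ ε₀ > (0:ℝ), ∀ ε : ℝ, 0 < ε → ε < ε₀ →
        (conj f S (u + ε • v) - conj f S u) * ((ε⁻¹ : ℝ) : EReal)
          ≤ ((⟪x, v⟫ + δ : ℝ) : EReal) := by
      by_contra hno
      push_neg at hno
      have hsel : ∀ n : ℕ, ∃ ε : ℝ, 0 < ε ∧ ε < ((n : ℝ) + 2)⁻¹ ∧
          ((⟪x, v⟫ + δ : ℝ) : EReal) <
            (conj f S (u + ε • v) - conj f S u) * ((ε⁻¹ : ℝ) : EReal) := by
        intro n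
        obtain ⟨ε, h1, h2, h3⟩ := hno (((n : ℝ) + 2)⁻¹) (by positivity)
        exact ⟨ε, h1, h2, h3⟩
      choose ε hεpos hεlt hεQ using hsel
      have hεhalf : ∀ n, ε n ≤ 1/2 := by
        intro n
        have h2 : ((n : ℝ) + 2)⁻¹ ≤ 1/2 := by
          rw [inv_le_comm₀ (by positivity) (by norm_num)]
          push_cast
          linarith [Nat.cast_nonneg (α := ℝ) n]
        linarith [hεlt n]
      have hεto : Tendsto ε atTop (𝓝 0) := by
        apply squeeze_zero (fun n => (hεpos n).le) (fun n => (hεlt n).le)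
        have h1 : Tendsto (fun n : ℕ => ((n : ℝ) + 2)) atTop atTop := by
          apply tendsto_atTop_add_const_right
          exact tendsto_natCast_atTop_atTop
        exact h1.inv_tendsto_atTop
      -- upper bound on conj at u + ε n • v
      have hub : ∀ n, conj f S (u + ε n • v) ≤ (((1 - ε n) * Mx + ε n * My : ℝ) : EReal) := by
        intro n
        refine iSup₂_le fun w hw => ?_
        rw [EReal.coe_le_coe_iff]
        have h1 : ⟪w, u + ε n • v⟫ = ⟪w, u⟫ + ε n * ⟪w, v⟫ := by
          simp only [inner_add_right, real_inner_smul_right]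
        have h2 := hMxw w hw
        have h3 := hMyw w hw
        have h4 := hvsplit w
        rw [h1]
        nlinarith [hεpos n, hεhalf n]
      -- lower bound
      have hlb : ∀ n, ((Mx + ε n * ⟪x, v⟫ : ℝ) : EReal) ≤ conj f S (u + ε n • v) := by
        intro n
        have h1 : ⟪x, u + ε n • v⟫ - f x = Mx + ε n * ⟪x, v⟫ := by
          simp only [inner_add_right, real_inner_smul_right]
          rw [hMx]; ring
        have := conj_ge f S hxS (u + ε n • v)
        rwa [h1] at this
      -- real value
      set m : ℕ → ℝ := fun n => (conj f S (u + ε n • v)).toReal with hm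
      have hmne : ∀ n, ((m n : ℝ) : EReal) = conj f S (u + ε n • v) := by
        intro n
        apply EReal.coe_toReal
        · exact ne_top_of_le_ne_top (EReal.coe_ne_top _) (hub n)
        · intro hbot
          have := hlb n
          rw [hbot] at this
          exact (EReal.bot_lt_coe _).not_ge this
      have hmub : ∀ n, m n ≤ (1 - ε n) * Mx + ε n * My := by
        intro n
        rw [← EReal.coe_le_coe_iff, hmne n]; exact hub n
      have hmlb : ∀ n, Mx + ε n * ⟪x, v⟫ ≤ m n := by
        intro n
        rw [← EReal.coe_le_coe_iff, hmne n]; exact hlb n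
      -- real version of hεQ
      have hQ : ∀ n, ⟪x, v⟫ + δ < (m n - Mx) * (ε n)⁻¹ := by
        intro n
        have h := hεQ n
        rw [hcu, ← hmne n, ← EReal.coe_sub, ← EReal.coe_mul,
          EReal.coe_lt_coe_iff] at h
        exact h
      have hQ' : ∀ n, ε n * (⟪x, v⟫ + δ) < m n - Mx := by
        intro n
        have h := hQ n
        have h2 : ε n * (⟪x, v⟫ + δ) < ε n * ((m n - Mx) * (ε n)⁻¹) :=
          mul_lt_mul_of_pos_left h (hεpos n)
        rwa [mul_comm (m n - Mx), ← mul_assoc, mul_inv_cancel₀ (ne_of_gt (hεpos n)),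
          one_mul] at h2
      -- approximate maximizers
      have happrox : ∀ n, ∃ w, w ∈ S ∧ m n - (ε n)^2 < ⟪w, u + ε n • v⟫ - f w := by
        intro n
        have hlt : ((m n - (ε n)^2 : ℝ) : EReal) < conj f S (u + ε n • v) := by
          rw [← hmne n, EReal.coe_lt_coe_iff]
          nlinarith [hεpos n]
        rw [conj] at hlt
        obtain ⟨w, hw⟩ := lt_iSup_iff.mp hlt
        obtain ⟨hwS, hgt⟩ := lt_iSup_iff.mp hw
        exact ⟨w, hwS, EReal.coe_lt_coe_iff.mp hgt⟩
      choose W hWS hWgt using happrox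
      have hWzn : ∀ n, ⟪W n, u + ε n • v⟫ = ⟪W n, u⟫ + ε n * ⟪W n, v⟫ := by
        intro n
        simp only [inner_add_right, real_inner_smul_right]
      -- h1 bounds
      have hh1ub : ∀ n, ⟪W n, u⟫ - f (W n) ≤ Mx := fun n => hMxw _ (hWS n)
      have hh2ub : ∀ n, ⟪W n, uy⟫ - f (W n) ≤ My := fun n => hMyw _ (hWS n)
      -- inner product with v large
      have hWv : ∀ n, ⟪x, v⟫ + δ - ε n < ⟪W n, v⟫ := by
        intro n
        have h1 := hWgt n
        rw [hWzn n] at h1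
        have h2 := hh1ub n
        have h3 := hQ' n
        nlinarith [hεpos n]
      -- lower bound on h1
      set A : ℝ := |Mx| + |My| + |⟪x, v⟫| + 1 with hA
      have hApos : 0 < A := by positivity
      have hh1lb : ∀ n, -(2*A) ≤ ⟪W n, u⟫ - f (W n) := by
        intro n
        have h1 := hWgt n
        rw [hWzn n] at h1
        have h4 := hvsplit (W n)
        have h2 := hh2ub n
        have h5 := hmlb n
        -- (1 - ε n) * h1 ≥ Mx + εn*⟪x,v⟫ - εn² - εn*My
        have h6 : (1 - ε n) * (⟪W n, u⟫ - f (W n)) ≥ Mx + ε n * ⟪x, v⟫ - (ε n)^2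
            - ε n * My := by nlinarith [hεpos n]
        have hεn2 : (ε n)^2 ≤ 1 := by nlinarith [hεpos n, hεhalf n]
        have e1 : -|⟪x, v⟫| ≤ ε n * ⟪x, v⟫ := by
          nlinarith [mul_nonneg (hεpos n).le
              (by linarith [neg_abs_le ⟪x, v⟫] : (0:ℝ) ≤ ⟪x, v⟫ + |⟪x, v⟫|),
            mul_nonneg (by linarith [hεhalf n] : (0:ℝ) ≤ 1 - ε n) (abs_nonneg ⟪x, v⟫)]
        have e2 : ε n * My ≤ |My| := by
          nlinarith [mul_nonneg (hεpos n).le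
              (by linarith [le_abs_self My] : (0:ℝ) ≤ |My| - My),
            mul_nonneg (by linarith [hεhalf n] : (0:ℝ) ≤ 1 - ε n) (abs_nonneg My)]
        have c1 : -A ≤ (1 - ε n) * (⟪W n, u⟫ - f (W n)) := by
          rw [hA]
          have := neg_abs_le Mx
          linarith [h6]
        by_cases hs : ⟪W n, u⟫ - f (W n) ≤ 0
        · have hint3 : 0 ≤ (1 - 2 * ε n) * (-(⟪W n, u⟫ - f (W n))) :=
            mul_nonneg (by linarith [hεhalf n]) (by linarith)
          nlinarith [c1]
        · nlinarith [hApos]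
      -- convergence of h1 to Mx
      have hh1to : Tendsto (fun n => ⟪W n, u⟫ - f (W n)) atTop (𝓝 Mx) := by
        have hlow : ∀ n, Mx - ε n * (|⟪x, v⟫| + 1 + |My| + 2*A) ≤ ⟪W n, u⟫ - f (W n) := by
          intro n
          have h1 := hWgt n
          rw [hWzn n] at h1
          have h4 := hvsplit (W n)
          have h2 := hh2ub n
          have h5 := hmlb n
          have h7 := hh1lb n
          have habs3 : -|⟪x, v⟫| ≤ ⟪x, v⟫ := neg_abs_le _
          have habs2 : My ≤ |My| := le_abs_self My
          have hε1 : ε n ≤ 1 := by linarith [hεhalf n]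
          nlinarith [hεpos n]
        have hto : Tendsto (fun n => Mx - ε n * (|⟪x, v⟫| + 1 + |My| + 2*A)) atTop
            (𝓝 (Mx - 0 * (|⟪x, v⟫| + 1 + |My| + 2*A))) :=
          tendsto_const_nhds.sub (hεto.mul tendsto_const_nhds)
        rw [zero_mul, sub_zero] at hto
        exact tendsto_of_tendsto_of_tendsto_of_le_of_le hto tendsto_const_nhds hlow hh1ub
      -- boundedness of W
      obtain ⟨R, hR⟩ := sublevel_bounded hconv hclosed hstrict hx hsubx (2*A)
      have hWball : ∀ n, W n ∈ Metric.closedBall (0 : E d) R := by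
        intro n
        rw [Metric.mem_closedBall, dist_zero_right]
        exact hR (W n) (hWS n) (by linarith [hh1lb n])
      obtain ⟨wl, _, φ, hφ, hWto⟩ :=
        (isCompact_closedBall (0 : E d) R).tendsto_subseq hWball
      -- limit of f(W (φ k))
      have hfWto : Tendsto (fun k => f (W (φ k))) atTop (𝓝 (⟪wl, u⟫ - Mx)) := by
        have h1 : Tendsto (fun k => ⟪W (φ k), u⟫) atTop (𝓝 ⟪wl, u⟫) :=
          hWto.inner tendsto_const_nhds
        have h2 : Tendsto (fun k => ⟪W (φ k), u⟫ - f (W (φ k))) atTop (𝓝 Mx) :=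
          hh1to.comp hφ.tendsto_atTop
        have := h1.sub h2
        simpa using this
      have hmem : (wl, ⟪wl, u⟫ - Mx) ∈ {p : E d × ℝ | p.1 ∈ S ∧ f p.1 ≤ p.2} :=
        hclosed.isSeqClosed (x := fun k => (W (φ k), f (W (φ k))))
          (fun k => ⟨hWS (φ k), le_rfl⟩) (hWto.prodMk_nhds hfWto)
      have heq : f wl = f x + ⟪u, wl - x⟫ := by
        have h1 : f x + ⟪u, wl - x⟫ ≤ f wl := hsubx _ hmem.1
        have h2 : f wl ≤ ⟪wl, u⟫ - Mx := hmem.2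
        have hi : ⟪u, wl - x⟫ = ⟪wl, u⟫ - ⟪x, u⟫ := by
          rw [inner_sub_right, real_inner_comm u wl, real_inner_comm u x]
        rw [hMx] at h2
        linarith [hi.le, hi.ge]
      have hwlx : wl = x := uniq hconv hstrict hx hsubx hmem.1 heq
      -- contradiction with hWv
      have hWvto : Tendsto (fun k => ⟪W (φ k), v⟫) atTop (𝓝 ⟪x, v⟫) := by
        have h0 : Tendsto (fun k => ⟪W (φ k), v⟫) atTop (𝓝 ⟪wl, v⟫) :=
          hWto.inner tendsto_const_nhds
        rwa [hwlx] at h0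
      have hεφto : Tendsto (fun k => ε (φ k)) atTop (𝓝 0) := hεto.comp hφ.tendsto_atTop
      have hfinal : Tendsto (fun k => ⟪W (φ k), v⟫ + ε (φ k)) atTop (𝓝 (⟪x, v⟫ + 0)) :=
        hWvto.add hεφto
      rw [add_zero] at hfinal
      have hge : ⟪x, v⟫ + δ ≤ ⟪x, v⟫ := by
        apply ge_of_tendsto hfinal
        filter_upwards with k
        linarith [hWv (φ k)]
      linarith
    obtain ⟨ε₀, hε₀, hbd⟩ := hev
    apply le_of_tendsto htend
    filter_upwards [Ioo_mem_nhdsGT_of_mem (Set.mem_Ico.mpr ⟨le_rfl, hε₀⟩)] with t ht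
    exact hbd t ht.1 ht.2
  refine EReal.le_of_forall_lt_iff_le.mp fun c hc => ?_
  have hδ : (0:ℝ) < c - ⟪x, v⟫ := by
    have := EReal.coe_lt_coe_iff.mp hc
    linarith
  have := key (c - ⟪x, v⟫) hδ
  simpa using this

/-- for essentially smooth convex `f` and all `x, y ∈ int(dom f)`,
`D_{f*}(∇f(y), ∇f(x)) ≤ D_f(x, y)`, where `D_{f*}` is the generalized Bregman divergence of
the convex conjugate (defined through one-sided directional derivatives `fstar'`); if `f` is
moreover strictly convex on `int(dom f)` (Legendre), this is an equality. -/
theorem stmt6 {d : ℕ} (f : E d → ℝ) (S : Set (E d)) (f' : E d → E d)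
    (hpcc : IsProperClosedConvexOn f S)
    (hes : IsEssentiallySmooth f S f')
    (fstar' : E d → E d → EReal)
    (hdir : IsOneSidedDirDerivE (conj f S) fstar' (f' '' interior S)) :
    (∀ x ∈ interior S, ∀ y ∈ interior S,
      conj f S (f' y) - conj f S (f' x) - fstar' (f' x) (f' y - f' x) ≤
        ((f x - f y - ⟪f' y, x - y⟫ : ℝ) : EReal)) ∧
    (StrictConvexOn ℝ (interior S) f →
      ∀ x ∈ interior S, ∀ y ∈ interior S,
        conj f S (f' y) - conj f S (f' x) - fstar' (f' x) (f' y - f' x) =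
          ((f x - f y - ⟪f' y, x - y⟫ : ℝ) : EReal)) := by
  obtain ⟨hSne, hconv, hclosed⟩ := hpcc
  obtain ⟨hine, hgrad, hblow⟩ := hes
  have main : ∀ x ∈ interior S, ∀ y ∈ interior S,
      conj f S (f' y) - conj f S (f' x) - fstar' (f' x) (f' y - f' x) ≤
        ((f x - f y - ⟪f' y, x - y⟫ : ℝ) : EReal) := by
    intro x hx y hy
    have hsubx : ∀ z ∈ S, f x + ⟪f' x, z - x⟫ ≤ f z := subgrad hconv hx (hgrad x hx)
    have hsuby : ∀ z ∈ S, f y + ⟪f' y, z - y⟫ ≤ f z := subgrad hconv hy (hgrad y hy)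
    have hcx : conj f S (f' x) = ((⟪x, f' x⟫ - f x : ℝ) : EReal) :=
      conj_eq (interior_subset hx) hsubx
    have hcy : conj f S (f' y) = ((⟪y, f' y⟫ - f y : ℝ) : EReal) :=
      conj_eq (interior_subset hy) hsuby
    have hlow : ((⟪x, f' y - f' x⟫ : ℝ) : EReal) ≤ fstar' (f' x) (f' y - f' x) :=
      fstar_lower (interior_subset hx) hsubx
        (hdir (f' x) ⟨x, hx, rfl⟩ (f' y - f' x))
    have hreal : (⟪y, f' y⟫ - f y) - (⟪x, f' x⟫ - f x) - ⟪x, f' y - f' x⟫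
        = f x - f y - ⟪f' y, x - y⟫ := by
      rw [inner_sub_right, inner_sub_right, real_inner_comm (f' y) x,
        real_inner_comm (f' y) y]
      ring
    calc conj f S (f' y) - conj f S (f' x) - fstar' (f' x) (f' y - f' x)
        = (((⟪y, f' y⟫ - f y) - (⟪x, f' x⟫ - f x) : ℝ) : EReal)
            - fstar' (f' x) (f' y - f' x) := by rw [hcx, hcy]; norm_cast
      _ ≤ (((⟪y, f' y⟫ - f y) - (⟪x, f' x⟫ - f x) : ℝ) : EReal)
            - ((⟪x, f' y - f' x⟫ : ℝ) : EReal) := EReal.sub_le_sub le_rfl hlow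
      _ = (((⟪y, f' y⟫ - f y) - (⟪x, f' x⟫ - f x) - ⟪x, f' y - f' x⟫ : ℝ) : EReal) := by
            norm_cast
      _ = ((f x - f y - ⟪f' y, x - y⟫ : ℝ) : EReal) := by rw [hreal]
  refine ⟨main, fun hstrict x hx y hy => ?_⟩
  have hsubx : ∀ z ∈ S, f x + ⟪f' x, z - x⟫ ≤ f z := subgrad hconv hx (hgrad x hx)
  have hsuby : ∀ z ∈ S, f y + ⟪f' y, z - y⟫ ≤ f z := subgrad hconv hy (hgrad y hy)
  have hcx : conj f S (f' x) = ((⟪x, f' x⟫ - f x : ℝ) : EReal) :=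
    conj_eq (interior_subset hx) hsubx
  have hcy : conj f S (f' y) = ((⟪y, f' y⟫ - f y : ℝ) : EReal) :=
    conj_eq (interior_subset hy) hsuby
  have hlow : ((⟪x, f' y - f' x⟫ : ℝ) : EReal) ≤ fstar' (f' x) (f' y - f' x) :=
    fstar_lower (interior_subset hx) hsubx
      (hdir (f' x) ⟨x, hx, rfl⟩ (f' y - f' x))
  have hup : fstar' (f' x) (f' y - f' x) ≤ ((⟪x, f' y - f' x⟫ : ℝ) : EReal) :=
    crux hconv hclosed hstrict hx hy hsubx hsuby
      (hdir (f' x) ⟨x, hx, rfl⟩ (f' y - f' x))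
  have hfs : fstar' (f' x) (f' y - f' x) = ((⟪x, f' y - f' x⟫ : ℝ) : EReal) :=
    le_antisymm hup hlow
  have hreal : (⟪y, f' y⟫ - f y) - (⟪x, f' x⟫ - f x) - ⟪x, f' y - f' x⟫
      = f x - f y - ⟪f' y, x - y⟫ := by
    rw [inner_sub_right, inner_sub_right, real_inner_comm (f' y) x,
      real_inner_comm (f' y) y]
    ring
  rw [hcx, hcy, hfs]
  norm_cast
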